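/- Let p > 1 and let q satisfy 1/p + 1/q = 1, let σ ∈ ℝ, let δ ∈ {−1, 1}, and let H and f be nonnegative Lebesgue-measurable functions on ℝ such that K(σ) := ∫_{−∞}^{∞} H(t) |t|^{σ-1} dt satisfies 0 < K(σ) < ∞. Then ∫_{−∞}^{∞} |y|^{pσ−1} (∫_{−∞}^{∞} H(x^δ · y) f(x) dx)^p dy ≤ K(σ)^p · ∫_{−∞}^{∞} |x|^{p(1−δσ)−1} f(x)^p dx, as an inequality in [0,∞] (for δ = −1, x^{−1} = 1/x for x ≠ 0). -/

import Mathlib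

open MeasureTheory Set

namespace Stmt15Aux

open ENNReal

lemma ae_ne_zero : ∀ᵐ x : ℝ, x ≠ 0 := by
  rw [ae_iff]
  simp

lemma lintegral_scale {a : ℝ} (ha : a ≠ 0) {g : ℝ → ℝ≥0∞} (hg : Measurable g) :
    ∫⁻ x : ℝ, g (a * x) = ENNReal.ofReal |a⁻¹| * ∫⁻ x : ℝ, g x := by
  rw [← lintegral_map hg (measurable_const_mul a), Real.map_volume_mul_left ha,
    lintegral_smul_measure, smul_eq_mul]

lemma lintegral_inv_rw (g : ℝ → ℝ≥0∞) :
    ∫⁻ x : ℝ, ENNReal.ofReal (x ^ 2)⁻¹ * g x⁻¹ = ∫⁻ x : ℝ, g x := by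
  have hs : MeasurableSet ({0}ᶜ : Set ℝ) := (measurableSet_singleton 0).compl
  have hae : ({0}ᶜ : Set ℝ) =ᵐ[volume] (univ : Set ℝ) := by
    rw [ae_eq_univ]
    simp
  have hderiv : ∀ x ∈ ({0}ᶜ : Set ℝ),
      HasDerivWithinAt (fun y : ℝ => y⁻¹) (-(x ^ 2)⁻¹) ({0}ᶜ : Set ℝ) x := fun x hx =>
    (hasDerivAt_inv hx).hasDerivWithinAt
  have hinj : InjOn (fun y : ℝ => y⁻¹) ({0}ᶜ : Set ℝ) := fun u _ v _ h => inv_injective h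
  have himg : (fun y : ℝ => y⁻¹) '' ({0}ᶜ : Set ℝ) = ({0}ᶜ : Set ℝ) := by
    ext x
    simp only [mem_image, mem_compl_iff, mem_singleton_iff]
    constructor
    · rintro ⟨y, hy, rfl⟩
      exact inv_ne_zero hy
    · intro hx
      exact ⟨x⁻¹, inv_ne_zero hx, inv_inv x⟩
  have key := lintegral_image_eq_lintegral_abs_det_fderiv_mul volume hs
    (fun x hx => (hderiv x hx).hasFDerivWithinAt) hinj g
  rw [himg] at key
  have habs : ∀ x : ℝ,
      ENNReal.ofReal |(ContinuousLinearMap.toSpanSingleton ℝ (-(x ^ 2)⁻¹)).det|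
        = ENNReal.ofReal (x ^ 2)⁻¹ := by
    intro x
    rw [ContinuousLinearMap.det_toSpanSingleton, abs_neg, abs_inv, abs_pow, sq_abs]
  calc ∫⁻ x : ℝ, ENNReal.ofReal (x ^ 2)⁻¹ * g x⁻¹
      = ∫⁻ x in ({0}ᶜ : Set ℝ), ENNReal.ofReal (x ^ 2)⁻¹ * g x⁻¹ := by
        rw [setLIntegral_congr hae, setLIntegral_univ]
    _ = ∫⁻ x in ({0}ᶜ : Set ℝ), g x := by
        rw [key]
        refine lintegral_congr fun x => ?_
        rw [habs x]
    _ = ∫⁻ x : ℝ, g x := by rw [setLIntegral_congr hae, setLIntegral_univ]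

/-- Scaling identity for weighted integrals: for `c ≠ 0`,
`∫ G(cx) |x|^β dx = |c|^{-(β+1)} ∫ G(t) |t|^β dt`. -/
lemma weighted_scale {c : ℝ} (hc : c ≠ 0) (β : ℝ) {G : ℝ → ℝ} (hG : Measurable G)
    (hG0 : ∀ t, 0 ≤ G t) :
    ∫⁻ x : ℝ, ENNReal.ofReal (G (c * x) * |x| ^ β)
      = ENNReal.ofReal (|c| ^ (-(β + 1))) * ∫⁻ t : ℝ, ENNReal.ofReal (G t * |t| ^ β) := by
  have hc' : (0 : ℝ) < |c| := abs_pos.2 hc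
  have hmeas : Measurable fun t : ℝ => ENNReal.ofReal (G t * |t| ^ β) :=
    (hG.mul ((continuous_abs.measurable).pow measurable_const)).ennreal_ofReal
  have step : ∀ᵐ x : ℝ, ENNReal.ofReal (G (c * x) * |x| ^ β)
      = ENNReal.ofReal (|c| ^ (-β)) * ENNReal.ofReal (G (c * x) * |c * x| ^ β) := by
    filter_upwards [ae_ne_zero] with x hx
    have hx' : (0 : ℝ) < |x| := abs_pos.2 hx
    rw [← ENNReal.ofReal_mul (by positivity)]
    congr 1
    rw [abs_mul, Real.mul_rpow hc'.le hx'.le,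
      show |c| ^ (-β) * (G (c * x) * (|c| ^ β * |x| ^ β))
        = G (c * x) * ((|c| ^ (-β) * |c| ^ β) * |x| ^ β) by ring,
      ← Real.rpow_add hc', neg_add_cancel, Real.rpow_zero, one_mul]
  rw [lintegral_congr_ae step, lintegral_const_mul' _ _ ENNReal.ofReal_ne_top,
    lintegral_scale hc hmeas, ← mul_assoc, ← ENNReal.ofReal_mul (by positivity)]
  congr 2
  rw [abs_inv, ← Real.rpow_neg_one |c|, ← Real.rpow_add hc']
  ring_nf

lemma meas_zpow {δ : ℤ} (hδ : δ = -1 ∨ δ = 1) : Measurable fun x : ℝ => x ^ δ := by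
  rcases hδ with rfl | rfl
  · simpa using (measurable_inv : Measurable fun x : ℝ => x⁻¹)
  · simp only [zpow_one]; exact measurable_id

/-- `∫ H(x^δ y) |y|^{σ-1} dy = |x|^{-δσ} K` for `x ≠ 0`. -/
lemma lemma2 {δ : ℤ} (hδ : δ = -1 ∨ δ = 1) (σ : ℝ) {H : ℝ → ℝ} (hH : Measurable H)
    (hH0 : ∀ t, 0 ≤ H t) {x : ℝ} (hx : x ≠ 0) :
    ∫⁻ y : ℝ, ENNReal.ofReal (H (x ^ δ * y) * |y| ^ (σ - 1))
      = ENNReal.ofReal (|x| ^ (-((δ : ℝ) * σ))) *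
          ∫⁻ t : ℝ, ENNReal.ofReal (H t * |t| ^ (σ - 1)) := by
  have hxδ : x ^ δ ≠ 0 := zpow_ne_zero δ hx
  have h := weighted_scale hxδ (σ - 1) hH hH0
  rw [show -(σ - 1 + 1) = -σ by ring] at h
  rw [h]
  congr 2
  have hx' : (0 : ℝ) < |x| := abs_pos.2 hx
  rcases hδ with rfl | rfl
  · rw [show ((-1 : ℤ) : ℝ) = -1 by norm_num]
    rw [zpow_neg_one, abs_inv, ← Real.rpow_neg_one |x|, ← Real.rpow_mul hx'.le]
    ring_nf
  · simp

/-- `∫ H(x^δ y) |x|^{δσ-1} dx = |y|^{-σ} K` for `y ≠ 0`. -/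
lemma lemma1 {δ : ℤ} (hδ : δ = -1 ∨ δ = 1) (σ : ℝ) {H : ℝ → ℝ} (hH : Measurable H)
    (hH0 : ∀ t, 0 ≤ H t) {y : ℝ} (hy : y ≠ 0) :
    ∫⁻ x : ℝ, ENNReal.ofReal (H (x ^ δ * y) * |x| ^ ((δ : ℝ) * σ - 1))
      = ENNReal.ofReal (|y| ^ (-σ)) *
          ∫⁻ t : ℝ, ENNReal.ofReal (H t * |t| ^ (σ - 1)) := by
  rcases hδ with rfl | rfl
  · -- δ = -1 : use inversion
    have hcast : ((-1 : ℤ) : ℝ) = -1 := by norm_num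
    have hmain : ∫⁻ x : ℝ, ENNReal.ofReal (H (x ^ (-1 : ℤ) * y) * |x| ^ ((-1 : ℝ) * σ - 1))
        = ∫⁻ x : ℝ, ENNReal.ofReal (x ^ 2)⁻¹ *
            (fun t : ℝ => ENNReal.ofReal (H (t * y) * |t| ^ (σ - 1))) x⁻¹ := by
      refine lintegral_congr_ae ?_
      filter_upwards [ae_ne_zero] with x hx
      have hx' : (0 : ℝ) < |x| := abs_pos.2 hx
      simp only [zpow_neg_one]
      rw [← ENNReal.ofReal_mul (by positivity)]
      congr 1
      rw [abs_inv, ← Real.rpow_neg_one |x|, ← Real.rpow_mul hx'.le]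
      have h2 : (x ^ 2 : ℝ)⁻¹ = |x| ^ (-2 : ℝ) := by
        rw [show (-2 : ℝ) = -(2 : ℕ) by norm_num, Real.rpow_neg hx'.le, Real.rpow_natCast,
          sq_abs]
      rw [h2, show |x| ^ (-2 : ℝ) * (H (x⁻¹ * y) * |x| ^ (-1 * (σ - 1)))
          = H (x⁻¹ * y) * (|x| ^ (-1 * (σ - 1)) * |x| ^ (-2 : ℝ)) by ring,
        ← Real.rpow_add hx']
      ring_nf
    rw [hcast, hmain, lintegral_inv_rw (fun t : ℝ => ENNReal.ofReal (H (t * y) * |t| ^ (σ - 1)))]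
    have h := weighted_scale hy (σ - 1) hH hH0
    rw [show -(σ - 1 + 1) = -σ by ring] at h
    rw [← h]
    refine lintegral_congr fun x => ?_
    rw [mul_comm x y]
  · have h := weighted_scale hy (σ - 1) hH hH0
    rw [show -(σ - 1 + 1) = -σ by ring] at h
    rw [← h]
    refine lintegral_congr fun x => ?_
    simp [mul_comm x y]

end Stmt15Aux

open Stmt15Aux ENNReal

/-- Whole-plane Yang–Hilbert lemma (`p > 1`, `δ ∈ {-1,1}`): for nonnegative measurable
`H`, `f` on `ℝ` with `0 < K(σ) = ∫_ℝ H(t) |t|^{σ-1} dt < ∞`,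
`∫_ℝ |y|^{pσ-1} (∫_ℝ H(x^δ y) f(x) dx)^p dy ≤ K(σ)^p ∫_ℝ |x|^{p(1-δσ)-1} f(x)^p dx`
as an inequality in `[0,∞]` (here `x^δ` is the integer power, so `x^{-1} = 1/x`). -/
theorem stmt15 (p q σ : ℝ) (hp : 1 < p) (hpq : 1 / p + 1 / q = 1)
    (δ : ℤ) (hδ : δ = -1 ∨ δ = 1)
    (H f : ℝ → ℝ) (hH : Measurable H) (hf : Measurable f)
    (hH0 : ∀ t : ℝ, 0 ≤ H t) (hf0 : ∀ x : ℝ, 0 ≤ f x)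
    (hK0 : 0 < ∫⁻ t : ℝ, ENNReal.ofReal (H t * |t| ^ (σ - 1)))
    (hK1 : (∫⁻ t : ℝ, ENNReal.ofReal (H t * |t| ^ (σ - 1))) < ⊤) :
    (∫⁻ y : ℝ,
        ENNReal.ofReal (|y| ^ (p * σ - 1)) *
          (∫⁻ x : ℝ, ENNReal.ofReal (H (x ^ δ * y) * f x)) ^ p)
      ≤ (∫⁻ t : ℝ, ENNReal.ofReal (H t * |t| ^ (σ - 1))) ^ p *
          ∫⁻ x : ℝ, ENNReal.ofReal (|x| ^ (p * (1 - (δ : ℝ) * σ) - 1) * f x ^ p) := by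
  have hpq' : p.HolderConjugate q := by
    have h1 : 1 / q = 1 - 1 / p := by linarith
    have h2 : 0 < 1 / q := by
      have : 1 / p < 1 := by rw [div_lt_one (by linarith)]; exact hp
      linarith
    exact ⟨by simpa [one_div] using hpq, by linarith, by simpa using h2⟩
  set K := ∫⁻ t : ℝ, ENNReal.ofReal (H t * |t| ^ (σ - 1)) with hKdef
  have hp0 : (0 : ℝ) < p := hpq'.pos
  have hq0 : (0 : ℝ) < q := hpq'.symm.pos
  have hdiv : p / q = p - 1 := hpq'.div_conj_eq_sub_one
  have hKfin : K ≠ ⊤ := hK1.ne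
  have hKne : K ≠ 0 := hK0.ne'
  set α : ℝ := (1 - (δ : ℝ) * σ) / q with hα
  have hpα : p * α = (1 - (δ : ℝ) * σ) * (p - 1) := by
    rw [hα, ← hdiv]
    field_simp
  have hδm : Measurable fun x : ℝ => x ^ δ := meas_zpow hδ
  have habs : Measurable fun x : ℝ => |x| := continuous_abs.measurable
  have hrp : ∀ β : ℝ, Measurable fun x : ℝ => |x| ^ β := fun β => habs.pow measurable_const
  have hHy : ∀ y : ℝ, Measurable fun x : ℝ => H (x ^ δ * y) := fun y =>
    hH.comp (hδm.mul_const y)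
  set J : ℝ → ℝ≥0∞ := fun y =>
    ∫⁻ x : ℝ, ENNReal.ofReal (H (x ^ δ * y) * (|x| ^ (p * α) * f x ^ p)) with hJ
  set W : ℝ → ℝ≥0∞ := fun y =>
    ∫⁻ x : ℝ, ENNReal.ofReal (H (x ^ δ * y) * |x| ^ ((δ : ℝ) * σ - 1)) with hW
  have hrpowp : ∀ X : ℝ≥0∞, (X ^ (1 / p)) ^ p = X := fun X => by
    rw [← ENNReal.rpow_mul, one_div, inv_mul_cancel₀ hp0.ne', ENNReal.rpow_one]
  have hrpowq : ∀ X : ℝ≥0∞, (X ^ (1 / q)) ^ q = X := fun X => by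
    rw [← ENNReal.rpow_mul, one_div, inv_mul_cancel₀ hq0.ne', ENNReal.rpow_one]
  -- Hölder step
  have holder : ∀ y : ℝ, (∫⁻ x : ℝ, ENNReal.ofReal (H (x ^ δ * y) * f x))
      ≤ (J y) ^ (1 / p) * (W y) ^ (1 / q) := by
    intro y
    set F1 : ℝ → ℝ≥0∞ := fun x =>
      ENNReal.ofReal (H (x ^ δ * y) * (|x| ^ (p * α) * f x ^ p)) ^ (1 / p) with hF1
    set F2 : ℝ → ℝ≥0∞ := fun x =>
      ENNReal.ofReal (H (x ^ δ * y) * |x| ^ ((δ : ℝ) * σ - 1)) ^ (1 / q) with hF2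
    have hF1m : AEMeasurable F1 volume :=
      (((hHy y).mul ((hrp _).mul (hf.pow measurable_const))).ennreal_ofReal.pow
        measurable_const).aemeasurable
    have hF2m : AEMeasurable F2 volume :=
      (((hHy y).mul (hrp _)).ennreal_ofReal.pow measurable_const).aemeasurable
    have hfac : ∀ᵐ x : ℝ, ENNReal.ofReal (H (x ^ δ * y) * f x) = (F1 * F2) x := by
      filter_upwards [ae_ne_zero] with x hx
      have hb : (0 : ℝ) < |x| := abs_pos.2 hx
      have nn1 : (0 : ℝ) ≤ H (x ^ δ * y) * (|x| ^ (p * α) * f x ^ p) :=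
        mul_nonneg (hH0 _) (mul_nonneg (Real.rpow_nonneg (abs_nonneg x) _)
          (Real.rpow_nonneg (hf0 x) _))
      have nn2 : (0 : ℝ) ≤ H (x ^ δ * y) * |x| ^ ((δ : ℝ) * σ - 1) :=
        mul_nonneg (hH0 _) (Real.rpow_nonneg (abs_nonneg x) _)
      simp only [Pi.mul_apply, hF1, hF2]
      rw [ENNReal.ofReal_rpow_of_nonneg nn1 (by positivity),
        ENNReal.ofReal_rpow_of_nonneg nn2 (by positivity),
        ← ENNReal.ofReal_mul (Real.rpow_nonneg nn1 _)]
      congr 1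
      rcases eq_or_lt_of_le (hH0 (x ^ δ * y)) with ha | ha
      · rw [← ha]
        simp only [zero_mul]
        rw [Real.zero_rpow (one_div_ne_zero hp0.ne'), zero_mul]
      · have e1 : (H (x ^ δ * y) * (|x| ^ (p * α) * f x ^ p)) ^ (1 / p)
            = H (x ^ δ * y) ^ (1 / p) * (|x| ^ α * f x) := by
          rw [Real.mul_rpow ha.le (mul_nonneg (Real.rpow_nonneg (abs_nonneg x) _)
              (Real.rpow_nonneg (hf0 x) _)),
            Real.mul_rpow (Real.rpow_nonneg (abs_nonneg x) _) (Real.rpow_nonneg (hf0 x) _),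
            ← Real.rpow_mul (abs_nonneg x), ← Real.rpow_mul (hf0 x),
            show p * α * (1 / p) = α by field_simp,
            show p * (1 / p) = 1 by field_simp, Real.rpow_one]
        have e2 : (H (x ^ δ * y) * |x| ^ ((δ : ℝ) * σ - 1)) ^ (1 / q)
            = H (x ^ δ * y) ^ (1 / q) * |x| ^ (((δ : ℝ) * σ - 1) * (1 / q)) := by
          rw [Real.mul_rpow ha.le (Real.rpow_nonneg (abs_nonneg x) _),
            ← Real.rpow_mul (abs_nonneg x)]
        rw [e1, e2,
          show H (x ^ δ * y) ^ (1 / p) * (|x| ^ α * f x) *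
              (H (x ^ δ * y) ^ (1 / q) * |x| ^ (((δ : ℝ) * σ - 1) * (1 / q)))
            = (H (x ^ δ * y) ^ (1 / p) * H (x ^ δ * y) ^ (1 / q)) *
              ((|x| ^ α * |x| ^ (((δ : ℝ) * σ - 1) * (1 / q))) * f x) by ring,
          ← Real.rpow_add ha, hpq, Real.rpow_one, ← Real.rpow_add hb,
          show α + ((δ : ℝ) * σ - 1) * (1 / q) = 0 by rw [hα]; field_simp; ring,
          Real.rpow_zero, one_mul]
    calc (∫⁻ x : ℝ, ENNReal.ofReal (H (x ^ δ * y) * f x))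
        = ∫⁻ x : ℝ, (F1 * F2) x := lintegral_congr_ae hfac
      _ ≤ (∫⁻ x : ℝ, F1 x ^ p) ^ (1 / p) * (∫⁻ x : ℝ, F2 x ^ q) ^ (1 / q) :=
          ENNReal.lintegral_mul_le_Lp_mul_Lq volume hpq' hF1m hF2m
      _ = (J y) ^ (1 / p) * (W y) ^ (1 / q) := by
          simp only [hF1, hF2, hrpowp, hrpowq, hJ, hW]
  -- pointwise a.e. estimate in y
  have key_y : ∀ᵐ y : ℝ, ENNReal.ofReal (|y| ^ (p * σ - 1)) *
      (∫⁻ x : ℝ, ENNReal.ofReal (H (x ^ δ * y) * f x)) ^ p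
      ≤ K ^ (p / q) * (ENNReal.ofReal (|y| ^ (σ - 1)) * J y) := by
    filter_upwards [ae_ne_zero] with y hy
    have hb : (0 : ℝ) < |y| := abs_pos.2 hy
    have hWy : W y = ENNReal.ofReal (|y| ^ (-σ)) * K := lemma1 hδ σ hH hH0 hy
    have h1 : (∫⁻ x : ℝ, ENNReal.ofReal (H (x ^ δ * y) * f x)) ^ p
        ≤ ((J y) ^ (1 / p) * (W y) ^ (1 / q)) ^ p :=
      ENNReal.rpow_le_rpow (holder y) hp0.le
    have h2 : ((J y) ^ (1 / p) * (W y) ^ (1 / q)) ^ p = J y * (W y) ^ (p / q) := by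
      rw [ENNReal.mul_rpow_of_nonneg _ _ hp0.le, hrpowp, ← ENNReal.rpow_mul, one_div,
        inv_mul_eq_div]
    have h3 : (W y) ^ (p / q) = ENNReal.ofReal (|y| ^ (-σ * (p / q))) * K ^ (p / q) := by
      rw [hWy, ENNReal.mul_rpow_of_nonneg _ _ (div_nonneg hp0.le hq0.le),
        ENNReal.ofReal_rpow_of_nonneg (Real.rpow_nonneg (abs_nonneg y) _)
          (div_nonneg hp0.le hq0.le),
        ← Real.rpow_mul (abs_nonneg y)]
    have h4 : ENNReal.ofReal (|y| ^ (p * σ - 1)) *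
        (∫⁻ x : ℝ, ENNReal.ofReal (H (x ^ δ * y) * f x)) ^ p
        ≤ ENNReal.ofReal (|y| ^ (p * σ - 1)) *
          (J y * (ENNReal.ofReal (|y| ^ (-σ * (p / q))) * K ^ (p / q))) := by
      refine mul_le_mul_right ?_ _
      rw [← h3, ← h2]
      exact h1
    refine h4.trans (le_of_eq ?_)
    have h5 : ENNReal.ofReal (|y| ^ (p * σ - 1)) * ENNReal.ofReal (|y| ^ (-σ * (p / q)))
        = ENNReal.ofReal (|y| ^ (σ - 1)) := by
      rw [← ENNReal.ofReal_mul (Real.rpow_nonneg (abs_nonneg y) _), ← Real.rpow_add hb]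
      congr 1
      rw [hdiv]
      ring
    rw [← h5]
    ring
  -- Tonelli step
  have main_swap : (∫⁻ y : ℝ, ENNReal.ofReal (|y| ^ (σ - 1)) * J y)
      = K * ∫⁻ x : ℝ, ENNReal.ofReal (|x| ^ (p * (1 - (δ : ℝ) * σ) - 1) * f x ^ p) := by
    have hswap : (∫⁻ y : ℝ, ENNReal.ofReal (|y| ^ (σ - 1)) * J y)
        = ∫⁻ x : ℝ, ∫⁻ y : ℝ, ENNReal.ofReal (|y| ^ (σ - 1)) *
            ENNReal.ofReal (H (x ^ δ * y) * (|x| ^ (p * α) * f x ^ p)) := by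
      have hpt : ∀ y : ℝ, ENNReal.ofReal (|y| ^ (σ - 1)) * J y
          = ∫⁻ x : ℝ, ENNReal.ofReal (|y| ^ (σ - 1)) *
              ENNReal.ofReal (H (x ^ δ * y) * (|x| ^ (p * α) * f x ^ p)) := fun y =>
        (lintegral_const_mul' _ _ ENNReal.ofReal_ne_top).symm
      rw [lintegral_congr hpt]
      have hmeas : AEMeasurable
          (Function.uncurry fun y x : ℝ => ENNReal.ofReal (|y| ^ (σ - 1)) *
            ENNReal.ofReal (H (x ^ δ * y) * (|x| ^ (p * α) * f x ^ p)))
          (volume.prod volume) := by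
        refine Measurable.aemeasurable ?_
        exact (((habs.comp measurable_fst).pow measurable_const).ennreal_ofReal).mul
          (((hH.comp ((hδm.comp measurable_snd).mul measurable_fst)).mul
            (((habs.comp measurable_snd).pow measurable_const).mul
              ((hf.comp measurable_snd).pow measurable_const))).ennreal_ofReal)
      exact lintegral_lintegral_swap hmeas
    rw [hswap]
    have inner : ∀ᵐ x : ℝ, (∫⁻ y : ℝ, ENNReal.ofReal (|y| ^ (σ - 1)) *
        ENNReal.ofReal (H (x ^ δ * y) * (|x| ^ (p * α) * f x ^ p)))
        = K * ENNReal.ofReal (|x| ^ (p * (1 - (δ : ℝ) * σ) - 1) * f x ^ p) := by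
      filter_upwards [ae_ne_zero] with x hx
      have hb : (0 : ℝ) < |x| := abs_pos.2 hx
      have hC : (0 : ℝ) ≤ |x| ^ (p * α) * f x ^ p :=
        mul_nonneg (Real.rpow_nonneg (abs_nonneg x) _) (Real.rpow_nonneg (hf0 x) _)
      have e : ∀ y : ℝ, ENNReal.ofReal (|y| ^ (σ - 1)) *
          ENNReal.ofReal (H (x ^ δ * y) * (|x| ^ (p * α) * f x ^ p))
          = ENNReal.ofReal (|x| ^ (p * α) * f x ^ p) *
            ENNReal.ofReal (H (x ^ δ * y) * |y| ^ (σ - 1)) := fun y => by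
        rw [← ENNReal.ofReal_mul (Real.rpow_nonneg (abs_nonneg y) _),
          ← ENNReal.ofReal_mul hC]
        congr 1
        ring
      rw [lintegral_congr e, lintegral_const_mul' _ _ ENNReal.ofReal_ne_top,
        lemma2 hδ σ hH hH0 hx, ← hKdef, ← mul_assoc,
        ← ENNReal.ofReal_mul hC, mul_comm (ENNReal.ofReal _) K]
      congr 1
      rw [show |x| ^ (p * α) * f x ^ p * |x| ^ (-((δ : ℝ) * σ))
          = (|x| ^ (p * α) * |x| ^ (-((δ : ℝ) * σ))) * f x ^ p by ring,
        ← Real.rpow_add hb, hpα,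
        show (1 - (δ : ℝ) * σ) * (p - 1) + -((δ : ℝ) * σ) = p * (1 - (δ : ℝ) * σ) - 1 by ring]
    rw [lintegral_congr_ae inner, lintegral_const_mul' _ _ hKfin]
  -- conclusion
  calc (∫⁻ y : ℝ, ENNReal.ofReal (|y| ^ (p * σ - 1)) *
        (∫⁻ x : ℝ, ENNReal.ofReal (H (x ^ δ * y) * f x)) ^ p)
      ≤ ∫⁻ y : ℝ, K ^ (p / q) * (ENNReal.ofReal (|y| ^ (σ - 1)) * J y) :=
        lintegral_mono_ae key_y
    _ = K ^ (p / q) * ∫⁻ y : ℝ, ENNReal.ofReal (|y| ^ (σ - 1)) * J y :=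
        lintegral_const_mul' _ _
          (ENNReal.rpow_ne_top_of_nonneg (div_nonneg hp0.le hq0.le) hKfin)
    _ = K ^ (p / q) * (K *
          ∫⁻ x : ℝ, ENNReal.ofReal (|x| ^ (p * (1 - (δ : ℝ) * σ) - 1) * f x ^ p)) := by
        rw [main_swap]
    _ = K ^ p * ∫⁻ x : ℝ, ENNReal.ofReal (|x| ^ (p * (1 - (δ : ℝ) * σ) - 1) * f x ^ p) := by
        rw [← mul_assoc]
        congr 1
        rw [hdiv]
        calc K ^ (p - 1) * K = K ^ (p - 1) * K ^ (1 : ℝ) := by rw [ENNReal.rpow_one]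
          _ = K ^ (p - 1 + 1) := (ENNReal.rpow_add _ _ hKne hKfin).symm
          _ = K ^ p := by norm_num
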